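/- Let B be an l^2 x l^2 real symmetric matrix partitioned into l x l blocks (B_{ik}) with B_{ii} = I_l for all i, and suppose that for some fixed indices i, j the block B_{ij} is an orthogonal matrix. If B is positive semidefinite, then B_{ik} = B_{ij} B_{jk} for all 1 <= k <= l. -/

import Mathlib

open Matrix

/-- Let `B` be an `l² × l²` real symmetric block matrix with `l × l` blocks `B_{ik}`,
`B_{ii} = I_l`, and suppose the block `B_{ij}` is orthogonal for some fixed `i, j`.
If `B` is positive semidefinite, then `B_{ik} = B_{ij} B_{jk}` for all `k`. -/
theorem block_product_of_psd_orthogonal_block (l : ℕ)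
    (Bblk : Fin l → Fin l → Matrix (Fin l) (Fin l) ℝ)
    (hdiag : ∀ i, Bblk i i = 1)
    (i j : Fin l)
    (horth : (Bblk i j)ᵀ * Bblk i j = 1)
    (hpsd : (Matrix.of fun (p q : Fin l × Fin l) => Bblk p.1 q.1 p.2 q.2).PosSemidef) :
    ∀ k : Fin l, Bblk i k = Bblk i j * Bblk j k := by
  intro k
  set M : Matrix (Fin l × Fin l) (Fin l × Fin l) ℝ :=
    Matrix.of fun (p q : Fin l × Fin l) => Bblk p.1 q.1 p.2 q.2 with hM
  have hsym : ∀ p q : Fin l, (Bblk p q)ᵀ = Bblk q p := by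
    intro p q
    ext a b
    have h := congrFun (congrFun hpsd.1 (q, a)) (p, b)
    simpa [M, Matrix.conjTranspose_apply] using h
  have hB2 : Bblk i j * (Bblk i j)ᵀ = 1 := mul_eq_one_comm.mp horth
  -- main claim: for all u, Bblk k i *ᵥ u = Bblk k j *ᵥ ((Bblk i j)ᵀ *ᵥ u)
  have key : ∀ u : Fin l → ℝ, Bblk k i *ᵥ u = Bblk k j *ᵥ ((Bblk i j)ᵀ *ᵥ u) := by
    intro u
    set w : Fin l → ℝ := (Bblk i j)ᵀ *ᵥ u with hw
    set x : Fin l × Fin l → ℝ :=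
      fun p => (if p.1 = i then u p.2 else 0) - (if p.1 = j then w p.2 else 0) with hx
    have hMx : ∀ p : Fin l × Fin l,
        (M *ᵥ x) p = (Bblk p.1 i *ᵥ u) p.2 - (Bblk p.1 j *ᵥ w) p.2 := by
      intro p
      simp only [M, x, Matrix.mulVec, dotProduct, Fintype.sum_prod_type,
        Matrix.of_apply, mul_sub, Finset.sum_sub_distrib, mul_ite, mul_zero]
      congr 1
      · rw [Finset.sum_comm]
        simp [Finset.sum_ite_eq]
      · rw [Finset.sum_comm]
        simp [Finset.sum_ite_eq]
    have hform : star x ⬝ᵥ M *ᵥ x = 0 := by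
      rw [dotProduct]
      apply Finset.sum_eq_zero
      intro p _
      rcases eq_or_ne p.1 i with hpi | hpi
      · have : (M *ᵥ x) p = 0 := by
          rw [hMx, hpi]
          have : Bblk i j *ᵥ w = u := by
            rw [hw, Matrix.mulVec_mulVec, hB2, Matrix.one_mulVec]
          rw [this, hdiag, Matrix.one_mulVec, sub_self]
        simp [this]
      · rcases eq_or_ne p.1 j with hpj | hpj
        · have : (M *ᵥ x) p = 0 := by
            rw [hMx, hpj, hdiag, Matrix.one_mulVec, hw, ← hsym, sub_self]
          simp [this]
        · have : x p = 0 := by simp [x, hpi, hpj]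
          simp [this]
    have hMx0 : M *ᵥ x = 0 := (hpsd.dotProduct_mulVec_zero_iff x).mp hform
    funext a
    have h := congrFun hMx0 (k, a)
    rw [hMx (k, a)] at h
    simp only [Pi.zero_apply, sub_eq_zero] at h
    exact h
  -- extract columns
  have hcol : Bblk k i = Bblk k j * (Bblk i j)ᵀ := by
    ext a b
    have h := congrFun (key (Pi.single b 1)) a
    simpa [Matrix.mulVec_single, Matrix.mulVec_mulVec, Matrix.mul_apply, Matrix.mulVec, dotProduct, Matrix.row, Pi.single_apply, mul_ite, Finset.sum_ite_eq'] using h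
  calc Bblk i k = (Bblk k i)ᵀ := (hsym k i).symm
    _ = (Bblk k j * (Bblk i j)ᵀ)ᵀ := by rw [hcol]
    _ = Bblk i j * Bblk j k := by rw [Matrix.transpose_mul, Matrix.transpose_transpose, hsym]
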